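/- Let a ∈ (0,1), b := √(1 − a²), and ε ∈ [0,1). Then for every z = (z₁,z₂) ∈ 𝔹₂ one has |z₁² + 2bz₂|² + ε²·|a²z₂ − bz₁²|² < (2 − a²)². Consequently, the function F_ε maps 𝔹₂ into 𝔻, i.e. |F_ε(z)| < 1 for all z ∈ 𝔹₂. -/

import Mathlib

open Metric Set Complex

noncomputable section

/-- `ℂⁿ` with the Euclidean norm; `𝔹ₙ` is `Metric.ball 0 1` in this space. -/
abbrev En (n : ℕ) := EuclideanSpace ℂ (Fin n)

/-- The Möbius map `m_a` interchanging `0` and `a`. -/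
def mob (a z : ℂ) : ℂ := (a - z) / (1 - (starRingEnd ℂ) a * z)

/-- A Blaschke product of degree `k`: `z ↦ η * ∏ j, m_{α j}(z)` with `|η| = 1`, `α j ∈ 𝔻`. -/
def IsBlaschke (k : ℕ) (B : ℂ → ℂ) : Prop :=
  ∃ η : ℂ, ‖η‖ = 1 ∧ ∃ α : Fin k → ℂ, (∀ j, α j ∈ ball (0 : ℂ) 1) ∧
    ∀ z : ℂ, B z = η * ∏ j, mob (α j) z

/-- The Pick problem `𝔹ₙ → 𝔻`, `z j ↦ lam j`, is extremal: it is solvable by a holomorphic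
map `𝔹ₙ → 𝔻`, but by no holomorphic solution with `sup_{𝔹ₙ} |G| < 1`. -/
def ExtremalPick {n : ℕ} {ι : Type} (z : ι → En n) (lam : ι → ℂ) : Prop :=
  (∃ F : En n → ℂ, DifferentiableOn ℂ F (ball 0 1) ∧
      MapsTo F (ball (0 : En n) 1) (ball (0 : ℂ) 1) ∧ ∀ j, F (z j) = lam j) ∧
  ¬ ∃ G : En n → ℂ, DifferentiableOn ℂ G (ball 0 1) ∧ (∀ j, G (z j) = lam j) ∧
      ∃ r : ℝ, r < 1 ∧ ∀ x ∈ ball (0 : En n) 1, ‖G x‖ ≤ r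

/-- An extremal 3-point Pick problem is non-degenerate if no 2-point subproblem is extremal. -/
def ExtremalPick3Nondeg {n : ℕ} (z : Fin 3 → En n) (lam : Fin 3 → ℂ) : Prop :=
  ExtremalPick z lam ∧
    ∀ i j : Fin 3, i ≠ j → ¬ ExtremalPick ![z i, z j] ![lam i, lam j]

/-- The function `F(z) = (z₁² + 2bz₂)/(2 − a²)` with `b = √(1 − a²)`. -/
def Fa (a : ℝ) (z : En 2) : ℂ :=
  ((z 0) ^ 2 + 2 * ((Real.sqrt (1 - a ^ 2) : ℝ) : ℂ) * z 1) / (2 - (a : ℂ) ^ 2)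

/-- The function `F_ε(z) = F(z)/√(1 − (ε²/(2−a²)²)(bz₁² − a²z₂)²)`, principal branch. -/
def Feps (a ε : ℝ) (z : En 2) : ℂ :=
  Fa a z /
    ((1 - ((ε : ℂ) ^ 2 / (2 - (a : ℂ) ^ 2) ^ 2) *
        (((Real.sqrt (1 - a ^ 2) : ℝ) : ℂ) * (z 0) ^ 2 - (a : ℂ) ^ 2 * z 1) ^ 2) ^
      ((1 : ℂ) / 2))

lemma key_real (b t s : ℝ) (hb0 : 0 < b) (ht : 0 ≤ t) (hs : 0 ≤ s)
    (h : t + s ^ 2 < 1) :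
    t ^ 2 + 2 * b * t * s + (1 + b ^ 2) * s ^ 2 < 1 + b ^ 2 := by
  have hs1 : s ^ 2 < 1 := by nlinarith
  nlinarith [sq_nonneg (b - s), mul_nonneg (mul_nonneg hb0.le hs) (sub_nonneg.2 hs1.le),
    mul_pos (by nlinarith : (0:ℝ) < 1 - s ^ 2 - t)
      (by nlinarith [mul_nonneg hb0.le hs] : (0:ℝ) < 1 - s ^ 2 + t + 2 * b * s)]

lemma aux_part1 (a ε : ℝ) (ha : a ∈ Ioo (0 : ℝ) 1) (hε : ε ∈ Ico (0 : ℝ) 1)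
    (b : ℝ) (hb : b = Real.sqrt (1 - a ^ 2)) :
    ∀ z ∈ ball (0 : En 2) 1,
      (‖(z 0) ^ 2 + 2 * (b : ℂ) * z 1‖) ^ 2 +
          ε ^ 2 * (‖(a : ℂ) ^ 2 * z 1 - (b : ℂ) * (z 0) ^ 2‖) ^ 2 <
        (2 - a ^ 2) ^ 2 := by
  obtain ⟨ha0, ha1⟩ := ha
  obtain ⟨hε0, hε1⟩ := hε
  have ha2 : a ^ 2 < 1 := by nlinarith
  have h1a : (0:ℝ) < 1 - a ^ 2 := by linarith
  have hb0 : 0 < b := hb ▸ Real.sqrt_pos.2 h1a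
  have hb2 : b ^ 2 = 1 - a ^ 2 := by rw [hb, Real.sq_sqrt h1a.le]
  have hε2 : ε ^ 2 ≤ 1 := by nlinarith
  intro z hz
  have hz1 : ‖z 0‖ ^ 2 + ‖z 1‖ ^ 2 < 1 := by
    have h1 : ‖z‖ < 1 := by simpa using mem_ball_zero_iff.1 hz
    have h2 : ‖z‖ ^ 2 < 1 := by nlinarith [norm_nonneg z]
    rw [EuclideanSpace.norm_eq, Real.sq_sqrt (by positivity)] at h2
    simpa [Fin.sum_univ_two] using h2
  set u : ℂ := (z 0) ^ 2 with hu
  set v : ℂ := z 1 with hv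
  set t : ℝ := ‖u‖ with htdef
  set s : ℝ := ‖v‖ with hsdef
  have ht0 : 0 ≤ t := htdef ▸ norm_nonneg u
  have hs0 : 0 ≤ s := hsdef ▸ norm_nonneg v
  have hts : t + s ^ 2 < 1 := by
    have h3 : t = ‖z 0‖ ^ 2 := by rw [htdef, hu, norm_pow]
    rw [h3]; exact hz1
  set A : ℝ := u.re with hAdef
  set B : ℝ := u.im with hBdef
  set C : ℝ := v.re with hCdef
  set D : ℝ := v.im with hDdef
  have hA : t ^ 2 = A ^ 2 + B ^ 2 := by
    rw [htdef, Complex.sq_norm, Complex.normSq_apply]; ring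
  have hC : s ^ 2 = C ^ 2 + D ^ 2 := by
    rw [hsdef, Complex.sq_norm, Complex.normSq_apply]; ring
  have hCS : A * C + B * D ≤ t * s := by
    have h4 : (u * (starRingEnd ℂ) v).re = A * C + B * D := by
      simp [Complex.mul_re, Complex.conj_re, Complex.conj_im]
      rfl
    have h5 : ‖u * (starRingEnd ℂ) v‖ = t * s := by
      rw [norm_mul, Complex.norm_conj]
    rw [← h4, ← h5]; exact Complex.re_le_norm _
  have N1 : ‖u + 2 * (b : ℂ) * v‖ ^ 2
      = (A + 2 * b * C) ^ 2 + (B + 2 * b * D) ^ 2 := by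
    rw [Complex.sq_norm, Complex.normSq_apply]
    simp [Complex.add_re, Complex.add_im, Complex.mul_re, Complex.mul_im]
    ring
  have N2 : ‖(a : ℂ) ^ 2 * v - (b : ℂ) * u‖ ^ 2
      = (a ^ 2 * C - b * A) ^ 2 + (a ^ 2 * D - b * B) ^ 2 := by
    rw [Complex.sq_norm, Complex.normSq_apply]
    simp [Complex.sub_re, Complex.sub_im, Complex.mul_re, Complex.mul_im,
      ← Complex.ofReal_pow]
    ring
  have hkey := key_real b t s hb0 ht0 hs0 hts
  have hX : ε ^ 2 * ((a ^ 2 * C - b * A) ^ 2 + (a ^ 2 * D - b * B) ^ 2)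
      ≤ (a ^ 2 * C - b * A) ^ 2 + (a ^ 2 * D - b * B) ^ 2 := by
    nlinarith [sq_nonneg (a ^ 2 * C - b * A), sq_nonneg (a ^ 2 * D - b * B)]
  have e1 : (A + 2 * b * C) ^ 2 + (B + 2 * b * D) ^ 2
      + ((a ^ 2 * C - b * A) ^ 2 + (a ^ 2 * D - b * B) ^ 2)
      = (1 + b ^ 2) * t ^ 2 + (1 + b ^ 2) ^ 2 * s ^ 2
        + 2 * b * (1 + b ^ 2) * (A * C + B * D) := by
    rw [hA, hC, show a ^ 2 = 1 - b ^ 2 by linarith]; ring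
  have e2 : 2 * b * (1 + b ^ 2) * (A * C + B * D) ≤ 2 * b * (1 + b ^ 2) * (t * s) :=
    mul_le_mul_of_nonneg_left hCS (by positivity)
  calc ‖u + 2 * (b : ℂ) * v‖ ^ 2
        + ε ^ 2 * ‖(a : ℂ) ^ 2 * v - (b : ℂ) * u‖ ^ 2
      = (A + 2 * b * C) ^ 2 + (B + 2 * b * D) ^ 2
        + ε ^ 2 * ((a ^ 2 * C - b * A) ^ 2 + (a ^ 2 * D - b * B) ^ 2) := by rw [N1, N2]
    _ ≤ (A + 2 * b * C) ^ 2 + (B + 2 * b * D) ^ 2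
        + ((a ^ 2 * C - b * A) ^ 2 + (a ^ 2 * D - b * B) ^ 2) := by linarith
    _ = (1 + b ^ 2) * t ^ 2 + (1 + b ^ 2) ^ 2 * s ^ 2
        + 2 * b * (1 + b ^ 2) * (A * C + B * D) := e1
    _ ≤ (1 + b ^ 2) * t ^ 2 + (1 + b ^ 2) ^ 2 * s ^ 2
        + 2 * b * (1 + b ^ 2) * (t * s) := by linarith
    _ = (1 + b ^ 2) * (t ^ 2 + 2 * b * t * s + (1 + b ^ 2) * s ^ 2) := by ring
    _ < (1 + b ^ 2) * (1 + b ^ 2) := mul_lt_mul_of_pos_left hkey (by positivity)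
    _ = (2 - a ^ 2) ^ 2 := by rw [show (2:ℝ) - a ^ 2 = 1 + b ^ 2 by linarith]; ring

/-- for `a ∈ (0,1)`, `b = √(1−a²)`, `ε ∈ [0,1)`, on `𝔹₂` one has
`|z₁² + 2bz₂|² + ε²|a²z₂ − bz₁²|² < (2 − a²)²`, and consequently `|F_ε| < 1` on `𝔹₂`. -/
theorem stmt_9 (a ε : ℝ) (ha : a ∈ Ioo (0 : ℝ) 1) (hε : ε ∈ Ico (0 : ℝ) 1)
    (b : ℝ) (hb : b = Real.sqrt (1 - a ^ 2)) :
    (∀ z ∈ ball (0 : En 2) 1,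
      (‖(z 0) ^ 2 + 2 * (b : ℂ) * z 1‖) ^ 2 +
          ε ^ 2 * (‖(a : ℂ) ^ 2 * z 1 - (b : ℂ) * (z 0) ^ 2‖) ^ 2 <
        (2 - a ^ 2) ^ 2) ∧
    ∀ z ∈ ball (0 : En 2) 1, ‖Feps a ε z‖ < 1 := by
  refine ⟨aux_part1 a ε ha hε b hb, ?_⟩
  have hmain := aux_part1 a ε ha hε b hb
  obtain ⟨ha0, ha1⟩ := ha
  obtain ⟨hε0, hε1⟩ := hε
  have ha2 : a ^ 2 < 1 := by nlinarith
  have h2a : (0:ℝ) < 2 - a ^ 2 := by nlinarith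
  intro z hz
  have h1 := hmain z hz
  set P := ‖(z 0) ^ 2 + 2 * (b : ℂ) * z 1‖ with hP
  set Q := ‖(a : ℂ) ^ 2 * z 1 - (b : ℂ) * (z 0) ^ 2‖ with hQ
  have hP0 : 0 ≤ P := hP ▸ norm_nonneg _
  have hQ0 : 0 ≤ Q := hQ ▸ norm_nonneg _
  have hbc : ((Real.sqrt (1 - a ^ 2) : ℝ) : ℂ) = ((b : ℝ) : ℂ) := by rw [hb]
  set w : ℂ := ((b : ℝ) : ℂ) * (z 0) ^ 2 - (a : ℂ) ^ 2 * z 1 with hw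
  set c : ℂ := (ε : ℂ) ^ 2 / (2 - (a : ℂ) ^ 2) ^ 2 with hc
  set Dd : ℂ := 1 - c * w ^ 2 with hD
  have habs2a : ‖2 - (a : ℂ) ^ 2‖ = 2 - a ^ 2 := by
    rw [show (2 : ℂ) - (a : ℂ) ^ 2 = ((2 - a ^ 2 : ℝ) : ℂ) by push_cast; ring,
      Complex.norm_real, Real.norm_eq_abs, abs_of_pos h2a]
  have hwabs : ‖w‖ = Q := by
    rw [hw, hQ, show ((b : ℝ) : ℂ) * (z 0) ^ 2 - (a : ℂ) ^ 2 * z 1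
      = -((a : ℂ) ^ 2 * z 1 - ((b : ℝ) : ℂ) * (z 0) ^ 2) by ring, norm_neg]
  have hcw : ‖c * w ^ 2‖ = ε ^ 2 * Q ^ 2 / (2 - a ^ 2) ^ 2 := by
    rw [norm_mul, hc, norm_div, norm_pow, norm_pow, norm_pow, habs2a, hwabs,
      Complex.norm_real, Real.norm_eq_abs, _root_.abs_of_nonneg hε0]
    ring
  have hDlow : 1 - ε ^ 2 * Q ^ 2 / (2 - a ^ 2) ^ 2 ≤ ‖Dd‖ := by
    have h5 := norm_sub_norm_le (1 : ℂ) (c * w ^ 2)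
    rw [norm_one] at h5
    rw [hD]
    calc 1 - ε ^ 2 * Q ^ 2 / (2 - a ^ 2) ^ 2 = 1 - ‖c * w ^ 2‖ := by rw [hcw]
      _ ≤ ‖1 - c * w ^ 2‖ := h5
  have hPD : P ^ 2 / (2 - a ^ 2) ^ 2 < ‖Dd‖ := by
    have h6 : P ^ 2 / (2 - a ^ 2) ^ 2 < 1 - ε ^ 2 * Q ^ 2 / (2 - a ^ 2) ^ 2 := by
      rw [div_lt_iff₀ (by positivity : (0:ℝ) < (2 - a ^ 2) ^ 2)] at *
      have : ε ^ 2 * Q ^ 2 / (2 - a ^ 2) ^ 2 * ((2 - a ^ 2) ^ 2)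
          = ε ^ 2 * Q ^ 2 := by field_simp
      nlinarith [h1]
    linarith
  have hDpos : 0 < ‖Dd‖ := lt_of_le_of_lt (by positivity) hPD
  have hDne : Dd ≠ 0 := by
    intro h0
    rw [h0, norm_zero] at hDpos
    exact lt_irrefl _ hDpos
  have habsF : ‖Feps a ε z‖
      = (P / (2 - a ^ 2)) / (‖Dd‖ ^ ((1:ℝ) / 2)) := by
    rw [Feps, Fa, hbc, norm_div, norm_div, habs2a]
    congr 1
    rw [show (1 : ℂ) - ((ε : ℂ) ^ 2 / (2 - (a : ℂ) ^ 2) ^ 2) *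
        (((b : ℝ) : ℂ) * (z 0) ^ 2 - (a : ℂ) ^ 2 * z 1) ^ 2 = Dd from rfl]
    rw [Complex.norm_cpow_of_ne_zero hDne]
    norm_num
  rw [habsF, ← Real.sqrt_eq_rpow]
  rw [div_lt_one (Real.sqrt_pos.2 hDpos)]
  rw [Real.lt_sqrt (div_nonneg hP0 h2a.le), div_pow]
  exact hPD
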